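/- (Generalization of Lemma 2 to n parents) Suppose n parent particles are produced with invariant masses m₁, …, m_n; for each k ∈ {1, …, n}, parent k has four-momentum equal to the sum of a visible four-momentum (E_v⁽ᵏ⁾, p_v⁽ᵏ⁾) and an invisible four-momentum (E_i⁽ᵏ⁾, p_i⁽ᵏ⁾), all daughter four-momenta being causal (E ≥ |p|). Let m_v⁽ᵏ⁾ and vT⁽ᵏ⁾ be the invariant mass and transverse momentum of visible system k, and let pTmiss be the sum of the transverse momenta of the n invisible four-momenta. Then m_{Tn} computed with all hypothesized invisible masses set to zero satisfies m_{Tn} ≤ max(m₁, …, m_n). -/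

import Mathlib

open scoped RealInnerProductSpace

/-- Transverse energy `e(m,p) = √(m² + |p|²)`. -/
noncomputable def transverseEnergy (m : ℝ) (p : EuclideanSpace ℝ (Fin 2)) : ℝ :=
  Real.sqrt (m ^ 2 + ‖p‖ ^ 2)

/-- Transverse mass `m_T(m_v, vT, m_i, qT)`. -/
noncomputable def transverseMass (mv : ℝ) (vT : EuclideanSpace ℝ (Fin 2))
    (mi : ℝ) (qT : EuclideanSpace ℝ (Fin 2)) : ℝ :=
  Real.sqrt (mv ^ 2 + mi ^ 2 +
    2 * (transverseEnergy mv vT * transverseEnergy mi qT - ⟪vT, qT⟫))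

/-- `m_{Tn}`: the `n`-parent generalisation of `mT2`. -/
noncomputable def mTn (n : ℕ) (mv : Fin n → ℝ) (vT : Fin n → EuclideanSpace ℝ (Fin 2))
    (ptmiss : EuclideanSpace ℝ (Fin 2)) (mi : Fin n → ℝ) : ℝ :=
  sInf {r : ℝ | ∃ q : Fin n → EuclideanSpace ℝ (Fin 2), (∑ k, q k) = ptmiss ∧
    r = ⨆ k, transverseMass (mv k) (vT k) (mi k) (q k)}

/-- Projection of a 3-momentum onto the transverse plane (first two coordinates). -/
noncomputable def projT (p : EuclideanSpace ℝ (Fin 3)) : EuclideanSpace ℝ (Fin 2) :=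
  WithLp.toLp 2 (fun i : Fin 2 => p i.castSucc)

/-- Invariant mass `√(E² − |p|²)` of a 3+1 four-momentum `(E, p)`. -/
noncomputable def invariantMass (E : ℝ) (p : EuclideanSpace ℝ (Fin 3)) : ℝ :=
  Real.sqrt (E ^ 2 - ‖p‖ ^ 2)

/-- generalisation of Lemma 2 to `n` parents: for `n` pair-produced
parents of masses `m₁, …, m_n`, each decaying to a visible and an invisible system,
`m_{Tn}` computed with vanishing hypothesized invisible masses is at most
`max(m₁, …, m_n)`. -/
lemma norm_sq3 (p : EuclideanSpace ℝ (Fin 3)) : ‖p‖^2 = p 0^2 + p 1^2 + p 2^2 := by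
  rw [EuclideanSpace.norm_eq, Real.sq_sqrt (by positivity)]
  simp [Fin.sum_univ_three, sq_abs]

lemma norm_sq2 (p : EuclideanSpace ℝ (Fin 2)) : ‖p‖^2 = p 0^2 + p 1^2 := by
  rw [EuclideanSpace.norm_eq, Real.sq_sqrt (by positivity)]
  simp [Fin.sum_univ_two, sq_abs]

lemma inner2 (x y : EuclideanSpace ℝ (Fin 2)) : ⟪x,y⟫ = x 0 * y 0 + x 1 * y 1 := by
  simp [PiLp.inner_apply, Fin.sum_univ_two, RCLike.inner_apply, mul_comm]

set_option maxHeartbeats 1000000 in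
/-- Key per-parent inequality. -/
lemma key (Ev Ei : ℝ) (pv pinv : EuclideanSpace ℝ (Fin 3))
    (hv : ‖pv‖ ≤ Ev) (hi : ‖pinv‖ ≤ Ei) :
    transverseMass (invariantMass Ev pv) (projT pv) 0 (projT pinv)
      ≤ invariantMass (Ev + Ei) (pv + pinv) := by
  have hEv : 0 ≤ Ev := le_trans (norm_nonneg _) hv
  have hEi : 0 ≤ Ei := le_trans (norm_nonneg _) hi
  have hv2 : ‖pv‖^2 ≤ Ev^2 := by nlinarith [norm_nonneg pv]
  have hi2 : ‖pinv‖^2 ≤ Ei^2 := by nlinarith [norm_nonneg pinv]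
  rw [transverseMass]
  conv_rhs => rw [invariantMass]
  apply Real.sqrt_le_sqrt
  have hmv : (invariantMass Ev pv)^2 = Ev^2 - ‖pv‖^2 := by
    rw [invariantMass, Real.sq_sqrt (by linarith)]
  have het : (transverseEnergy (invariantMass Ev pv) (projT pv))^2
      = Ev^2 - (pv 2)^2 := by
    rw [transverseEnergy, Real.sq_sqrt (by positivity), hmv, norm_sq2, norm_sq3]
    show Ev ^ 2 - (pv 0 ^ 2 + pv 1 ^ 2 + pv 2 ^ 2) + (pv 0 ^ 2 + pv 1 ^ 2) = _
    ring
  have heq : (transverseEnergy 0 (projT pinv))^2 = (pinv 0)^2 + (pinv 1)^2 := by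
    rw [transverseEnergy, Real.sq_sqrt (by positivity), norm_sq2]
    show (0:ℝ)^2 + (pinv 0 ^ 2 + pinv 1 ^ 2) = _
    ring
  have hetn : 0 ≤ transverseEnergy (invariantMass Ev pv) (projT pv) := Real.sqrt_nonneg _
  have heqn : 0 ≤ transverseEnergy 0 (projT pinv) := Real.sqrt_nonneg _
  have hzv : (pv 2)^2 ≤ Ev^2 := by
    rw [norm_sq3] at hv2; nlinarith [sq_nonneg (pv 0), sq_nonneg (pv 1)]
  have hzi : (pinv 0)^2 + (pinv 1)^2 ≤ Ei^2 - (pinv 2)^2 := by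
    rw [norm_sq3] at hi2; linarith
  -- product bound: ET_v * ET_q ≤ Ev*Ei - pv2*pinv2
  have hprod : transverseEnergy (invariantMass Ev pv) (projT pv)
      * transverseEnergy 0 (projT pinv) ≤ Ev * Ei - pv 2 * pinv 2 := by
    have h1 : (transverseEnergy (invariantMass Ev pv) (projT pv)
        * transverseEnergy 0 (projT pinv))^2 ≤ (Ev^2 - (pv 2)^2) * (Ei^2 - (pinv 2)^2) := by
      rw [mul_pow, het, heq]
      apply mul_le_mul_of_nonneg_left hzi (by linarith)
    have h2 : (Ev^2 - (pv 2)^2) * (Ei^2 - (pinv 2)^2) ≤ (Ev * Ei - pv 2 * pinv 2)^2 := by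
      nlinarith [sq_nonneg (Ev * pinv 2 - Ei * pv 2)]
    have hrhs : 0 ≤ Ev * Ei - pv 2 * pinv 2 := by
      have h3 : (pv 2)^2 * (pinv 2)^2 ≤ Ev^2 * Ei^2 := by
        rw [norm_sq3] at hi2
        nlinarith [sq_nonneg (pinv 0), sq_nonneg (pinv 1)]
      nlinarith [mul_nonneg hEv hEi, abs_nonneg (pv 2 * pinv 2),
        sq_abs (pv 2 * pinv 2), le_abs_self (pv 2 * pinv 2)]
    nlinarith [mul_nonneg hetn heqn]
  rw [inner2]
  have hp0 : projT pv 0 = pv 0 := rfl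
  have hp1 : projT pv 1 = pv 1 := rfl
  have hq0 : projT pinv 0 = pinv 0 := rfl
  have hq1 : projT pinv 1 = pinv 1 := rfl
  rw [hp0, hp1, hq0, hq1, hmv]
  have hsum : ‖pv + pinv‖^2 = ‖pv‖^2 + ‖pinv‖^2
      + 2*(pv 0 * pinv 0 + pv 1 * pinv 1 + pv 2 * pinv 2) := by
    rw [norm_sq3, norm_sq3, norm_sq3]
    show (pv 0 + pinv 0)^2 + (pv 1 + pinv 1)^2 + (pv 2 + pinv 2)^2 = _
    ring
  rw [hsum]
  rw [norm_sq3] at hi2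
  linarith [norm_sq3 pinv]

theorem mTn_le_max_parent_masses (n : ℕ) (hn : 0 < n) (m : Fin n → ℝ)
    (Ev Ei : Fin n → ℝ) (pv pinv : Fin n → EuclideanSpace ℝ (Fin 3))
    (hv : ∀ k, ‖pv k‖ ≤ Ev k) (hi : ∀ k, ‖pinv k‖ ≤ Ei k)
    (hm : ∀ k, invariantMass (Ev k + Ei k) (pv k + pinv k) = m k) :
    mTn n (fun k => invariantMass (Ev k) (pv k)) (fun k => projT (pv k))
      (∑ k, projT (pinv k)) (fun _ => 0) ≤ ⨆ k, m k := by
  haveI : Nonempty (Fin n) := ⟨⟨0, hn⟩⟩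
  set f : Fin n → ℝ := fun k =>
    transverseMass (invariantMass (Ev k) (pv k)) (projT (pv k)) 0 (projT (pinv k)) with hf
  have hmem : (⨆ k, f k) ∈ {r : ℝ | ∃ q : Fin n → EuclideanSpace ℝ (Fin 2),
      (∑ k, q k) = ∑ k, projT (pinv k) ∧
      r = ⨆ k, transverseMass (invariantMass (Ev k) (pv k)) (projT (pv k)) 0 (q k)} :=
    ⟨fun k => projT (pinv k), rfl, rfl⟩
  have hbdd : BddBelow {r : ℝ | ∃ q : Fin n → EuclideanSpace ℝ (Fin 2),
      (∑ k, q k) = ∑ k, projT (pinv k) ∧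
      r = ⨆ k, transverseMass (invariantMass (Ev k) (pv k)) (projT (pv k)) 0 (q k)} := by
    refine ⟨0, fun r hr => ?_⟩
    obtain ⟨q, -, rfl⟩ := hr
    have : (0:ℝ) ≤ transverseMass (invariantMass (Ev ⟨0,hn⟩) (pv ⟨0,hn⟩))
        (projT (pv ⟨0,hn⟩)) 0 (q ⟨0,hn⟩) := Real.sqrt_nonneg _
    exact this.trans (le_ciSup (f := fun j => transverseMass (invariantMass (Ev j) (pv j))
      (projT (pv j)) 0 (q j)) (Set.Finite.bddAbove (Set.finite_range _)) ⟨0, hn⟩)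
  have h1 : mTn n (fun k => invariantMass (Ev k) (pv k)) (fun k => projT (pv k))
      (∑ k, projT (pinv k)) (fun _ => 0) ≤ ⨆ k, f k := csInf_le hbdd hmem
  refine h1.trans (ciSup_le fun k => ?_)
  have h2 : f k ≤ m k := by
    rw [hf, ← hm k]
    exact key (Ev k) (Ei k) (pv k) (pinv k) (hv k) (hi k)
  exact h2.trans (le_ciSup (Set.Finite.bddAbove (Set.finite_range _)) k)
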